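/- Let v₁, v₂, v₃ ∈ ℝ² and set τ = ω(v₁,v₂)·ω(v₂,v₃)·ω(v₃,v₁). Then the signature of the Maslov matrix θ(v₁,v₂,v₃) equals the sign of τ: it is 1 if τ > 0, −1 if τ < 0, and 0 if τ = 0. -/

import Mathlib

open Matrix

/-- The standard symplectic form on `ℝ²`. -/
def omegaForm (u v : ℝ × ℝ) : ℝ := u.1 * v.2 - u.2 * v.1

/-- The signature of a real `3 × 3` matrix: the number of positive eigenvalues minus
the number of negative eigenvalues (defined to be `0` if the matrix is not symmetric). -/
noncomputable def matSignature (A : Matrix (Fin 3) (Fin 3) ℝ) : ℤ :=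
  if h : A.IsHermitian then
    ((Finset.univ.filter (fun i => 0 < h.eigenvalues i)).card : ℤ)
      - ((Finset.univ.filter (fun i => h.eigenvalues i < 0)).card : ℤ)
  else 0

/-- The Maslov matrix `θ(v₁, v₂, v₃)`. -/
def maslovMatrix (v₁ v₂ v₃ : ℝ × ℝ) : Matrix (Fin 3) (Fin 3) ℝ :=
  !![0, -omegaForm v₁ v₂, omegaForm v₁ v₃;
     -omegaForm v₁ v₂, 0, -omegaForm v₂ v₃;
     omegaForm v₁ v₃, -omegaForm v₂ v₃, 0]

lemma maslov_isHermitian (v₁ v₂ v₃ : ℝ × ℝ) : (maslovMatrix v₁ v₂ v₃).IsHermitian := by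
  show (maslovMatrix v₁ v₂ v₃)ᴴ = _
  ext i j
  fin_cases i <;> fin_cases j <;> simp [maslovMatrix]

lemma trace_eq_sum_eigs (A : Matrix (Fin 3) (Fin 3) ℝ) (h : A.IsHermitian) :
    A.trace = ∑ i, h.eigenvalues i := by
  nth_rewrite 1 [h.spectral_theorem]
  rw [Unitary.conjStarAlgAut_apply]
  rw [Matrix.trace_mul_cycle]
  rw [show (star (h.eigenvectorUnitary : Matrix (Fin 3) (Fin 3) ℝ)) *
      (h.eigenvectorUnitary : Matrix (Fin 3) (Fin 3) ℝ) = 1 from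
    Unitary.coe_star_mul_self h.eigenvectorUnitary]
  simp [Matrix.trace_diagonal]


set_option maxHeartbeats 4000000 in
lemma count_aux (x y z : ℝ) (hsum : x + y + z = 0) :
    (x * y * z < 0 →
      ((if 0 < x then (1:ℤ) else 0) + (if 0 < y then 1 else 0) + (if 0 < z then 1 else 0))
        - ((if x < 0 then (1:ℤ) else 0) + (if y < 0 then 1 else 0) + (if z < 0 then 1 else 0)) = 1) ∧
    (0 < x * y * z →
      ((if 0 < x then (1:ℤ) else 0) + (if 0 < y then 1 else 0) + (if 0 < z then 1 else 0))
        - ((if x < 0 then (1:ℤ) else 0) + (if y < 0 then 1 else 0) + (if z < 0 then 1 else 0)) = -1) ∧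
    (x * y * z = 0 →
      ((if 0 < x then (1:ℤ) else 0) + (if 0 < y then 1 else 0) + (if 0 < z then 1 else 0))
        - ((if x < 0 then (1:ℤ) else 0) + (if y < 0 then 1 else 0) + (if z < 0 then 1 else 0)) = 0) := by
  rcases lt_trichotomy x 0 with hx | hx | hx <;>
  rcases lt_trichotomy y 0 with hy | hy | hy <;>
  rcases lt_trichotomy z 0 with hz | hz | hz <;>
  refine ⟨fun hp => ?_, fun hp => ?_, fun hp => ?_⟩ <;>
  split_ifs <;>
  first
    | linarith
    | (exfalso; nlinarith [hp, mul_eq_zero_of_left (mul_eq_zero_of_left hx y) z])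
    | (exfalso; nlinarith [hp, mul_eq_zero_of_left (mul_eq_zero_of_right x hy) z])
    | (exfalso; nlinarith [hp, mul_eq_zero_of_right (x*y) hz])
    | (exfalso; nlinarith [hp, mul_pos (mul_pos hx hy) hz])
    | (exfalso; nlinarith [hp, mul_pos (mul_pos_of_neg_of_neg hx hy) hz])
    | (exfalso; nlinarith [hp, mul_pos_of_neg_of_neg (mul_neg_of_neg_of_pos hx hy) hz])
    | (exfalso; nlinarith [hp, mul_pos_of_neg_of_neg (mul_neg_of_pos_of_neg hx hy) hz])
    | (exfalso; nlinarith [hp, mul_neg_of_pos_of_neg (mul_pos hx hy) hz])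
    | (exfalso; nlinarith [hp, mul_neg_of_neg_of_pos (mul_neg_of_pos_of_neg hx hy) hz])
    | (exfalso; nlinarith [hp, mul_neg_of_neg_of_pos (mul_neg_of_neg_of_pos hx hy) hz])
    | (exfalso; nlinarith [hp, mul_neg_of_pos_of_neg (mul_pos_of_neg_of_neg hx hy) hz])

theorem signature_maslov_eq_sign_tau (v₁ v₂ v₃ : ℝ × ℝ) (τ : ℝ)
    (hτ : τ = omegaForm v₁ v₂ * omegaForm v₂ v₃ * omegaForm v₃ v₁) :
    (0 < τ → matSignature (maslovMatrix v₁ v₂ v₃) = 1) ∧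
    (τ < 0 → matSignature (maslovMatrix v₁ v₂ v₃) = -1) ∧
    (τ = 0 → matSignature (maslovMatrix v₁ v₂ v₃) = 0) := by
  have h := maslov_isHermitian v₁ v₂ v₃
  set x := h.eigenvalues 0 with hx
  set y := h.eigenvalues 1 with hy
  set z := h.eigenvalues 2 with hz
  have hsum : x + y + z = 0 := by
    have := trace_eq_sum_eigs _ h
    rw [Fin.sum_univ_three] at this
    have ht : (maslovMatrix v₁ v₂ v₃).trace = 0 := by
      simp [maslovMatrix, Matrix.trace_fin_three]
    linarith [this, ht]
  have hprod : x * y * z = -2 * τ := by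
    have hd := h.det_eq_prod_eigenvalues
    rw [Fin.prod_univ_three] at hd
    have hdet : (maslovMatrix v₁ v₂ v₃).det = -2 * τ := by
      rw [Matrix.det_fin_three]
      simp [maslovMatrix, omegaForm, hτ]
      ring
    simp only [RCLike.ofReal_real_eq_id, id_eq, ← hx, ← hy, ← hz] at hd
    rw [hdet] at hd
    linarith [hd]
  have hsig : matSignature (maslovMatrix v₁ v₂ v₃) =
      (((if 0 < x then 1 else 0) + (if 0 < y then 1 else 0) + (if 0 < z then 1 else 0) : ℕ) : ℤ)
      - (((if x < 0 then 1 else 0) + (if y < 0 then 1 else 0) + (if z < 0 then 1 else 0) : ℕ) : ℤ) := by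
    rw [matSignature, dif_pos h]
    congr 2 <;> rw [Finset.card_filter, Fin.sum_univ_three]
  obtain ⟨c1, c2, c3⟩ := count_aux x y z hsum
  refine ⟨fun hpos => ?_, fun hneg => ?_, fun hzer => ?_⟩ <;> rw [hsig] <;> push_cast
  · exact c1 (by linarith)
  · exact c2 (by linarith)
  · exact c3 (by rw [hprod, hzer]; ring)
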